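/- A permutation π ∈ S_n is monotone (i.e., for each i, either π(j) < π(i) for all j < i, or π(j) > π(i) for all j < i) and starts at k (π(1) = k) if and only if it is obtained by the following construction: choose a set D ⊆ {2,…,n} with |D| = k−1, place the numbers 1,…,k−1 in the positions of D in decreasing order, and place the numbers k+1,…,n in the remaining positions of {2,…,n} in increasing order. This gives a bijection between the set M_n^k of monotone permutations starting at k and the set of (k−1)-element subsets of {2,…,n}. -/

import Mathlib

/-- A permutation `π` of `Fin n` (thought of as 1-based `S_n`) is *monotone* if for each
position `i`, either all earlier values are smaller, or all earlier values are larger. -/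
def IsMonotonePerm {n : ℕ} (π : Equiv.Perm (Fin n)) : Prop :=
  ∀ i : Fin n, (∀ j : Fin n, j < i → π j < π i) ∨ (∀ j : Fin n, j < i → π i < π j)

/-- A (0-based) position `i` is a *drop* of `π` if `i ≥ 1` (1-based `i ≥ 2`) and all earlier
values are larger than `π i`. -/
def IsDrop {n : ℕ} (π : Equiv.Perm (Fin n)) (i : Fin n) : Prop :=
  0 < i.val ∧ ∀ j : Fin n, j < i → π i < π j

/-- The set of drops of `π`. -/
def dropSet {n : ℕ} (π : Equiv.Perm (Fin n)) : Finset (Fin n) :=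
  Finset.univ.filter (fun i : Fin n => 0 < i.val ∧ ∀ j : Fin n, j < i → π i < π j)

namespace MonoAux

variable {n : ℕ}

lemma mem_dropSet {π : Equiv.Perm (Fin n)} {i : Fin n} :
    i ∈ dropSet π ↔ IsDrop π i := by
  simp [dropSet, IsDrop]

lemma not_drop_lt {π : Equiv.Perm (Fin n)} (hm : IsMonotonePerm π)
    {i j : Fin n} (hij : i < j) (hj : ¬ IsDrop π j) : π i < π j := by
  rcases hm j with h | h
  · exact h i hij
  · have hj0 : (0:ℕ) < j.val := lt_of_le_of_lt (Nat.zero_le _) hij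
    exact absurd ⟨hj0, h⟩ hj

lemma drop_iff {k : Fin n} {π : Equiv.Perm (Fin n)} (hm : IsMonotonePerm π)
    (h0 : π ⟨0, k.pos⟩ = k) (i : Fin n) :
    IsDrop π i ↔ 0 < i.val ∧ π i < k := by
  constructor
  · rintro ⟨hi, h⟩
    refine ⟨hi, ?_⟩
    have := h ⟨0, k.pos⟩ (by simpa [Fin.lt_def] using hi)
    rwa [h0] at this
  · rintro ⟨hi, h⟩
    refine ⟨hi, fun j hj => ?_⟩
    rcases hm i with hr | hd
    · have := hr ⟨0, k.pos⟩ (by simpa [Fin.lt_def] using hi)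
      rw [h0] at this
      exact absurd h (not_lt.2 this.le)
    · exact hd j hj

lemma gt_of_not_drop {k : Fin n} {π : Equiv.Perm (Fin n)} (hm : IsMonotonePerm π)
    (h0 : π ⟨0, k.pos⟩ = k) {i : Fin n} (hi : 0 < i.val) (hnd : ¬ IsDrop π i) :
    k < π i := by
  have : (⟨0, k.pos⟩ : Fin n) < i := by simpa [Fin.lt_def] using hi
  have := not_drop_lt hm this hnd
  rwa [h0] at this

/-- card formula for drop positions -/
lemma card_formula_drop {k : Fin n} {π : Equiv.Perm (Fin n)} (hm : IsMonotonePerm π)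
    (h0 : π ⟨0, k.pos⟩ = k) {i : Fin n} (hi : IsDrop π i) :
    ((dropSet π).filter (fun j => j < i)).card = k.val - (π i).val - 1 := by
  have hlt : π i < k := ((drop_iff hm h0 i).1 hi).2
  have : ((dropSet π).filter (fun j => j < i)).card = (Finset.Ioo (π i) k).card := by
    apply Finset.card_nbij π
    · intro j hj
      rw [Finset.mem_coe, Finset.mem_filter] at hj
      obtain ⟨hjd, hji⟩ := hj
      rw [Finset.mem_coe, Finset.mem_Ioo]
      exact ⟨hi.2 j hji, ((drop_iff hm h0 j).1 (mem_dropSet.1 hjd)).2⟩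
    · exact fun a _ b _ h => π.injective h
    · intro v hv
      simp only [Finset.coe_Ioo, Set.mem_Ioo] at hv
      refine ⟨π.symm v, ?_, by simp⟩
      have hv1 : π i < π (π.symm v) := by simpa using hv.1
      have hv2 : π (π.symm v) < k := by simpa using hv.2
      have hne : π.symm v ≠ ⟨0, k.pos⟩ := by
        intro h; rw [h, h0] at hv2; exact lt_irrefl _ hv2
      have hpos : 0 < (π.symm v).val := by
        rcases Nat.eq_zero_or_pos (π.symm v).val with h | h
        · exact absurd (Fin.ext h) hne
        · exact h
      have hd : IsDrop π (π.symm v) := (drop_iff hm h0 _).2 ⟨hpos, hv2⟩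
      have hji : π.symm v < i := by
        rcases lt_trichotomy (π.symm v) i with h | h | h
        · exact h
        · rw [h] at hv1; exact absurd hv1 (lt_irrefl _)
        · exact absurd (hd.2 i h) (not_lt.2 hv1.le)
      simp only [Finset.coe_filter, Set.mem_setOf_eq]
      exact ⟨mem_dropSet.2 hd, hji⟩
  rw [this, Fin.card_Ioo]

/-- card formula for non-drop positions -/
lemma card_formula_rise {k : Fin n} {π : Equiv.Perm (Fin n)} (hm : IsMonotonePerm π)
    (h0 : π ⟨0, k.pos⟩ = k) {i : Fin n} (hi : ¬ IsDrop π i) :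
    ((Finset.Iio i).filter (fun j => j ∉ dropSet π)).card = (π i).val - k.val := by
  have : ((Finset.Iio i).filter (fun j => j ∉ dropSet π)).card = (Finset.Ico k (π i)).card := by
    apply Finset.card_nbij π
    · intro j hj
      rw [Finset.mem_coe, Finset.mem_filter, Finset.mem_Iio] at hj
      obtain ⟨hji, hjd⟩ := hj
      rw [mem_dropSet] at hjd
      rw [Finset.mem_coe, Finset.mem_Ico]
      refine ⟨?_, not_drop_lt hm hji hi⟩
      rcases Nat.eq_zero_or_pos j.val with h | h
      · have : j = ⟨0, k.pos⟩ := Fin.ext h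
        rw [this, h0]
      · exact (gt_of_not_drop hm h0 h hjd).le
    · exact fun a _ b _ h => π.injective h
    · intro v hv
      simp only [Finset.coe_Ico, Set.mem_Ico] at hv
      refine ⟨π.symm v, ?_, by simp⟩
      have hv1 : k ≤ π (π.symm v) := by simpa using hv.1
      have hv2 : π (π.symm v) < π i := by simpa using hv.2
      have hnd : ¬ IsDrop π (π.symm v) := by
        intro hd
        have := ((drop_iff hm h0 _).1 hd).2
        exact absurd hv1 (not_le.2 this)
      have hji : π.symm v < i := by
        rcases lt_trichotomy (π.symm v) i with h | h | h
        · exact h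
        · rw [h] at hv2; exact absurd hv2 (lt_irrefl _)
        · exact absurd (not_drop_lt hm h hnd) (not_lt.2 hv2.le)
      simp only [Finset.coe_filter, Set.mem_setOf_eq, Finset.mem_Iio]
      exact ⟨hji, fun hmem => hnd (mem_dropSet.1 hmem)⟩
  rw [this, Fin.card_Ico]

lemma dropSet_card {k : Fin n} {π : Equiv.Perm (Fin n)} (hm : IsMonotonePerm π)
    (h0 : π ⟨0, k.pos⟩ = k) : (dropSet π).card = k.val := by
  have h1 : dropSet π = Finset.univ.filter (fun i => π i < k) := by
    ext i
    rw [mem_dropSet, drop_iff hm h0, Finset.mem_filter]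
    simp only [Finset.mem_univ, true_and]
    constructor
    · exact fun h => h.2
    · intro h
      refine ⟨?_, h⟩
      rcases Nat.eq_zero_or_pos i.val with hz | hz
      · have : i = ⟨0, k.pos⟩ := Fin.ext hz
        rw [this, h0] at h
        exact absurd h (lt_irrefl _)
      · exact hz
  rw [h1]
  have : (Finset.univ.filter (fun i => π i < k)).card = (Finset.Iio k).card := by
    apply Finset.card_nbij π
    · intro j hj
      rw [Finset.mem_coe, Finset.mem_filter] at hj
      simpa using hj.2
    · exact fun a _ b _ h => π.injective h
    · intro v hv
      simp only [Finset.coe_Iio, Set.mem_Iio] at hv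
      refine ⟨π.symm v, ?_, by simp⟩
      simp only [Finset.coe_filter, Set.mem_setOf_eq, Finset.mem_univ, true_and]
      simpa using hv
  rw [this, Fin.card_Iio]

/-! ### Construction of the permutation from a drop set -/

variable (k : Fin n) (D : Finset (Fin n))

def aCnt (i : Fin n) : ℕ := (D.filter (fun j => j < i)).card

def cCnt (i : Fin n) : ℕ := ((Finset.Iio i).filter (fun j => j ∉ D)).card

lemma aCnt_lt (hDc : D.card = k.val) {i : Fin n} (hi : i ∈ D) : aCnt D i < k.val := by
  rw [← hDc]
  exact Finset.card_lt_card (Finset.filter_ssubset.2 ⟨i, hi, lt_irrefl i⟩)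

lemma cCnt_bound (hDc : D.card = k.val) {i : Fin n} (hi : i ∉ D) :
    k.val + cCnt D i < n := by
  have hpart : ((Finset.Iio i).filter (fun j => j ∈ D)).card + cCnt D i = i.val := by
    have := Finset.card_filter_add_card_filter_not (s := Finset.Iio i)
      (fun j => j ∈ D)
    rw [Fin.card_Iio] at this
    exact this
  have ha : ((Finset.Iio i).filter (fun j => j ∈ D)).card = aCnt D i := by
    unfold aCnt
    congr 1
    ext j
    simp [and_comm]
  have heq : D.filter (fun j => i < j) = D.filter (fun j => ¬ j < i) := by
    apply Finset.filter_congr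
    intro j hj
    have hne : j ≠ i := fun h => hi (h ▸ hj)
    simp only [not_lt, eq_iff_iff]
    constructor
    · exact fun h => h.le
    · exact fun h => lt_of_le_of_ne h (Ne.symm hne)
  have hab : aCnt D i + (D.filter (fun j => i < j)).card = k.val := by
    unfold aCnt
    rw [heq, Finset.card_filter_add_card_filter_not (fun j => j < i), hDc]
  have hb : (D.filter (fun j => i < j)).card ≤ n - 1 - i.val := by
    rw [← Fin.card_Ioi i]
    apply Finset.card_le_card
    intro j hj
    rw [Finset.mem_filter] at hj
    rw [Finset.mem_Ioi]
    exact hj.2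
  rw [ha] at hpart
  have := i.isLt
  omega

def gfun (hDc : D.card = k.val) (i : Fin n) : Fin n :=
  if h : i ∈ D then ⟨k.val - 1 - aCnt D i, by have := k.isLt; omega⟩
  else ⟨k.val + cCnt D i, cCnt_bound k D hDc h⟩

lemma gfun_anti (hDc : D.card = k.val) {i j : Fin n} (hij : i < j) (hj : j ∈ D) :
    gfun k D hDc j < gfun k D hDc i := by
  have hk1 : 0 < k.val := by
    rw [← hDc]; exact Finset.card_pos.2 ⟨j, hj⟩
  have haj : aCnt D j < k.val := aCnt_lt k D hDc hj
  unfold gfun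
  by_cases hi : i ∈ D
  · have hmono : aCnt D i < aCnt D j := by
      apply Finset.card_lt_card
      constructor
      · intro x hx
        rw [Finset.mem_filter] at hx ⊢
        exact ⟨hx.1, lt_trans hx.2 hij⟩
      · intro hsub
        have : i ∈ D.filter (fun x => x < i) := hsub (by
          rw [Finset.mem_filter]; exact ⟨hi, hij⟩)
        rw [Finset.mem_filter] at this
        exact absurd this.2 (lt_irrefl i)
    have hai : aCnt D i < k.val := aCnt_lt k D hDc hi
    rw [dif_pos hi, dif_pos hj, Fin.mk_lt_mk]
    omega
  · rw [dif_neg hi, dif_pos hj, Fin.mk_lt_mk]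
    omega

lemma gfun_mono (hDc : D.card = k.val) {i j : Fin n} (hij : i < j) (hj : j ∉ D) :
    gfun k D hDc i < gfun k D hDc j := by
  unfold gfun
  by_cases hi : i ∈ D
  · have hk1 : 0 < k.val := by
      rw [← hDc]; exact Finset.card_pos.2 ⟨i, hi⟩
    rw [dif_pos hi, dif_neg hj, Fin.mk_lt_mk]
    omega
  · have hmono : cCnt D i < cCnt D j := by
      apply Finset.card_lt_card
      constructor
      · intro x hx
        rw [Finset.mem_filter, Finset.mem_Iio] at hx ⊢
        exact ⟨lt_trans hx.1 hij, hx.2⟩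
      · intro hsub
        have : i ∈ (Finset.Iio i).filter (fun x => x ∉ D) := hsub (by
          rw [Finset.mem_filter, Finset.mem_Iio]; exact ⟨hij, hi⟩)
        rw [Finset.mem_filter, Finset.mem_Iio] at this
        exact absurd this.1 (lt_irrefl i)
    rw [dif_neg hi, dif_neg hj, Fin.mk_lt_mk]
    omega

lemma gfun_bijective (hDc : D.card = k.val) : Function.Bijective (gfun k D hDc) := by
  rw [Fintype.bijective_iff_injective_and_card]
  refine ⟨?_, rfl⟩
  intro i j h
  by_contra hne
  rcases lt_or_gt_of_ne hne with hij | hij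
  · by_cases hj : j ∈ D
    · exact absurd h (ne_of_gt (gfun_anti k D hDc hij hj))
    · exact absurd h (ne_of_lt (gfun_mono k D hDc hij hj))
  · by_cases hj : i ∈ D
    · exact absurd h (ne_of_lt (gfun_anti k D hDc hij hj))
    · exact absurd h (ne_of_gt (gfun_mono k D hDc hij hj))

noncomputable def gperm (hDc : D.card = k.val) : Equiv.Perm (Fin n) :=
  Equiv.ofBijective _ (gfun_bijective k D hDc)

lemma gperm_apply (hDc : D.card = k.val) (i : Fin n) :
    gperm k D hDc i = gfun k D hDc i := rfl

lemma gperm_monotone (hDc : D.card = k.val) : IsMonotonePerm (gperm k D hDc) := by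
  intro i
  by_cases hi : i ∈ D
  · exact Or.inr (fun j hj => gfun_anti k D hDc hj hi)
  · exact Or.inl (fun j hj => gfun_mono k D hDc hj hi)

lemma gperm_zero (hD0 : (⟨0, k.pos⟩ : Fin n) ∉ D) (hDc : D.card = k.val) :
    gperm k D hDc ⟨0, k.pos⟩ = k := by
  rw [gperm_apply]
  unfold gfun
  rw [dif_neg hD0]
  have hc : cCnt D ⟨0, k.pos⟩ = 0 := by
    unfold cCnt
    rw [Finset.card_eq_zero]
    ext j
    simp only [Finset.mem_filter, Finset.mem_Iio, Finset.notMem_empty, iff_false, not_and]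
    intro h
    exact absurd h (by simp [Fin.lt_def])
  exact Fin.ext (by simp [hc])

lemma gperm_dropSet (hD0 : (⟨0, k.pos⟩ : Fin n) ∉ D) (hDc : D.card = k.val) :
    dropSet (gperm k D hDc) = D := by
  ext i
  rw [mem_dropSet]
  constructor
  · rintro ⟨hi, h⟩
    by_contra hiD
    have h0i : (⟨0, k.pos⟩ : Fin n) < i := by simpa [Fin.lt_def] using hi
    have := h ⟨0, k.pos⟩ h0i
    rw [gperm_zero k D hD0 hDc] at this
    have hge : k ≤ gperm k D hDc i := by
      rw [gperm_apply]
      unfold gfun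
      rw [dif_neg hiD]
      exact Fin.le_def.2 (by simp)
    exact absurd this (not_lt.2 hge)
  · intro hiD
    have hi0 : 0 < i.val := by
      rcases Nat.eq_zero_or_pos i.val with h | h
      · have hi0 : i = ⟨0, k.pos⟩ := Fin.ext h
        rw [hi0] at hiD
        exact absurd hiD hD0
      · exact h
    exact ⟨hi0, fun j hj => gfun_anti k D hDc hj hiD⟩

end MonoAux

/-- Monotone permutations starting at `k` (here `k : Fin n` is the 0-based start value,
so the 1-based start is `k.val + 1`) are in bijection, via their sets of drops, with the
`k.val`-element subsets of the (0-based) positions `{1,…,n-1}`; moreover the drops are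
exactly the positions carrying the values `< k`, these values appear in decreasing order,
and the remaining values (all `> k`) appear in increasing order. -/
theorem monotone_perm_drop_bijection (n : ℕ) (k : Fin n) :
    Set.BijOn (fun π : Equiv.Perm (Fin n) => dropSet π)
      {π : Equiv.Perm (Fin n) | IsMonotonePerm π ∧ π ⟨0, k.pos⟩ = k}
      {D : Finset (Fin n) | (⟨0, k.pos⟩ : Fin n) ∉ D ∧ D.card = k.val} ∧
    ∀ π : Equiv.Perm (Fin n), IsMonotonePerm π → π ⟨0, k.pos⟩ = k →
      (∀ i : Fin n, IsDrop π i ↔ 0 < i.val ∧ π i < k) ∧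
      (∀ i j : Fin n, IsDrop π i → IsDrop π j → i < j → π j < π i) ∧
      (∀ i j : Fin n, 0 < i.val → ¬ IsDrop π i → ¬ IsDrop π j → i < j → π i < π j) ∧
      (∀ i : Fin n, 0 < i.val → ¬ IsDrop π i → k < π i) := by
  constructor
  · refine ⟨?_, ?_, ?_⟩
    · -- MapsTo
      rintro π ⟨hm, h0⟩
      refine ⟨?_, MonoAux.dropSet_card hm h0⟩
      intro hmem
      exact absurd (MonoAux.mem_dropSet.1 hmem).1 (lt_irrefl 0)
    · -- InjOn
      rintro π ⟨hm, h0⟩ π' ⟨hm', h0'⟩ hD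
      simp only at hD
      apply Equiv.ext
      intro i
      by_cases hd : IsDrop π i
      · have hd' : IsDrop π' i :=
          MonoAux.mem_dropSet.1 (hD ▸ MonoAux.mem_dropSet.2 hd)
        have f1 := MonoAux.card_formula_drop hm h0 hd
        have f2 := MonoAux.card_formula_drop hm' h0' hd'
        rw [hD] at f1
        have hlt : (π i).val < k.val := ((MonoAux.drop_iff hm h0 i).1 hd).2
        have hlt' : (π' i).val < k.val := ((MonoAux.drop_iff hm' h0' i).1 hd').2
        exact Fin.ext (by omega)
      · have hd' : ¬ IsDrop π' i := fun h =>
          hd (MonoAux.mem_dropSet.1 (hD.symm ▸ MonoAux.mem_dropSet.2 h))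
        rcases Nat.eq_zero_or_pos i.val with hz | hz
        · have hi : i = ⟨0, k.pos⟩ := Fin.ext hz
          rw [hi, h0, h0']
        · have f1 := MonoAux.card_formula_rise hm h0 hd
          have f2 := MonoAux.card_formula_rise hm' h0' hd'
          rw [hD] at f1
          have hgt : k.val < (π i).val := MonoAux.gt_of_not_drop hm h0 hz hd
          have hgt' : k.val < (π' i).val := MonoAux.gt_of_not_drop hm' h0' hz hd'
          exact Fin.ext (by omega)
    · -- SurjOn
      rintro D ⟨hD0, hDc⟩
      refine ⟨MonoAux.gperm k D hDc, ⟨MonoAux.gperm_monotone k D hDc,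
        MonoAux.gperm_zero k D hD0 hDc⟩, ?_⟩
      exact MonoAux.gperm_dropSet k D hD0 hDc
  · intro π hm h0
    refine ⟨MonoAux.drop_iff hm h0, ?_, ?_, ?_⟩
    · intro i j _ hj hij
      exact hj.2 i hij
    · intro i j _ _ hj hij
      exact MonoAux.not_drop_lt hm hij hj
    · intro i hi hnd
      exact MonoAux.gt_of_not_drop hm h0 hi hnd
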